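/- Let G be a group. Then the following four maps G³ → G³ are tetrahedron maps: T₁(x,y,z) = (yxy, y⁻¹, z⁻¹); Ť₁(x,y,z) = (x⁻¹, zyz, z⁻¹); T₂(x,y,z) = (x⁻¹, xyx, z⁻¹); Ť₂(x,y,z) = (x⁻¹, y⁻¹, yzy). -/
import Mathlib


/-- `T` acting on factors 1,2,3 of the sixfold Cartesian product `D⁶`. -/
def tetra123 {D : Type*} (T : D × D × D → D × D × D) :
    D × D × D × D × D × D → D × D × D × D × D × D :=
  fun q =>
    match q with
    | (x, y, z, r, s, t) =>
      ((T (x, y, z)).1, (T (x, y, z)).2.1, (T (x, y, z)).2.2, r, s, t)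

/-- `T` acting on factors 1,4,5 of the sixfold Cartesian product `D⁶`. -/
def tetra145 {D : Type*} (T : D × D × D → D × D × D) :
    D × D × D × D × D × D → D × D × D × D × D × D :=
  fun q =>
    match q with
    | (x, y, z, r, s, t) =>
      ((T (x, r, s)).1, y, z, (T (x, r, s)).2.1, (T (x, r, s)).2.2, t)

/-- `T` acting on factors 2,4,6 of the sixfold Cartesian product `D⁶`. -/
def tetra246 {D : Type*} (T : D × D × D → D × D × D) :
    D × D × D × D × D × D → D × D × D × D × D × D :=
  fun q =>
    match q with
    | (x, y, z, r, s, t) =>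
      (x, (T (y, r, t)).1, z, (T (y, r, t)).2.1, s, (T (y, r, t)).2.2)

/-- `T` acting on factors 3,5,6 of the sixfold Cartesian product `D⁶`. -/
def tetra356 {D : Type*} (T : D × D × D → D × D × D) :
    D × D × D × D × D × D → D × D × D × D × D × D :=
  fun q =>
    match q with
    | (x, y, z, r, s, t) =>
      (x, y, (T (z, s, t)).1, r, (T (z, s, t)).2.1, (T (z, s, t)).2.2)

/-- The (Zamolodchikov) tetrahedron equation for a map `T : D³ → D³`. -/
def IsTetrahedronMap {D : Type*} (T : D × D × D → D × D × D) : Prop :=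
  tetra123 T ∘ tetra145 T ∘ tetra246 T ∘ tetra356 T =
    tetra356 T ∘ tetra246 T ∘ tetra145 T ∘ tetra123 T

theorem stmt_11 {G : Type*} [Group G] :
    IsTetrahedronMap (fun p : G × G × G => (p.2.1 * p.1 * p.2.1, p.2.1⁻¹, p.2.2⁻¹)) ∧
    IsTetrahedronMap (fun p : G × G × G => (p.1⁻¹, p.2.2 * p.2.1 * p.2.2, p.2.2⁻¹)) ∧
    IsTetrahedronMap (fun p : G × G × G => (p.1⁻¹, p.1 * p.2.1 * p.1, p.2.2⁻¹)) ∧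
    IsTetrahedronMap (fun p : G × G × G => (p.1⁻¹, p.2.1⁻¹, p.2.1 * p.2.2 * p.2.1)) := by
  refine ⟨?_, ?_, ?_, ?_⟩ <;>
  · funext q
    obtain ⟨x, y, z, r, s, t⟩ := q
    simp only [IsTetrahedronMap, tetra123, tetra145, tetra246, tetra356, Function.comp_apply,
      Prod.mk.injEq]
    constructorm* _ ∧ _ <;> group
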